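/- arXiv:1806.07875 — 2 statements merged into one kernel-verified Lean document; each statement's English description precedes it below -/
import Mathlib

section
/- For a tripartite pure state |ψ⟩^{RAB} with ψ^R = 𝟙/D, the conditional max-entropy satisfies H_max(A|B)_ψ ≤ log₂(λ₀^B · D), where λ₀^B is the largest eigenvalue of ψ^B, and H_max(A|B)_ψ is characterized as the logarithm of the minimum over positive semidefinite Z^{AB} satisfying 𝟙^R ⊗ Z^{AB} ≥ |ψ⟩⟨ψ|^{RAB} of the operator norm of Z^B = Tr_A Z^{AB}. -/
open Matrix Kronecker Finset
open scoped ComplexConjugate Classical ComplexOrder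

noncomputable section

/-- Density matrix (outer product) of a vector. -/
def dmv {n : Type*} (v : n → ℂ) : Matrix n n ℂ :=
  Matrix.of fun i j => v i * conj (v j)

/-- Outer product `|u⟩⟨v|`. -/
def outer {n : Type*} (u v : n → ℂ) : Matrix n n ℂ :=
  Matrix.of fun i j => u i * conj (v j)

/-- Largest eigenvalue of a (Hermitian) matrix. -/
def maxEig {n : Type*} [Fintype n] [DecidableEq n] (A : Matrix n n ℂ) : ℝ :=
  if h : A.IsHermitian then ⨆ i, h.eigenvalues i else 0

/-- Sum of the `k` largest eigenvalues of a Hermitian matrix. -/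
def topSum {n : Type*} [Fintype n] [DecidableEq n] (A : Matrix n n ℂ) (k : ℕ) : ℝ :=
  if h : A.IsHermitian then
    sSup {x : ℝ | ∃ s : Finset n, s.card = k ∧ x = ∑ i ∈ s, h.eigenvalues i}
  else 0

/-- Majorization of Hermitian operators: `A ≺ B` (possibly on different spaces):
every partial sum of the `k` largest eigenvalues of `A` is at most that of `B`,
and the traces agree. -/
def Maj {m n : Type*} [Fintype m] [DecidableEq m] [Fintype n] [DecidableEq n]
    (A : Matrix m m ℂ) (B : Matrix n n ℂ) : Prop :=
  (∀ k : ℕ, topSum A k ≤ topSum B k) ∧ A.trace = B.trace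

/-- Total matrix square root: the positive square root for PSD matrices, `0` otherwise. -/
def msqrt {n : Type*} [Fintype n] [DecidableEq n] (A : Matrix n n ℂ) : Matrix n n ℂ :=
  if h : A.PosSemidef then
    h.1.eigenvectorUnitary.1 * diagonal (fun i => ((Real.sqrt (h.1.eigenvalues i) : ℝ) : ℂ)) *
      (star h.1.eigenvectorUnitary : Matrix n n ℂ)
  else 0

/-- Trace norm (sum of singular values). -/
def traceNorm {n : Type*} [Fintype n] [DecidableEq n] (A : Matrix n n ℂ) : ℝ :=
  ((msqrt (Aᴴ * A)).trace).re

/-- Fidelity `F(ρ,σ) = ‖√ρ √σ‖₁`. -/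
def fid {n : Type*} [Fintype n] [DecidableEq n] (ρ σ : Matrix n n ℂ) : ℝ :=
  traceNorm (msqrt ρ * msqrt σ)

/-- Purified distance `P(ρ,σ) = √(1 − F²(ρ,σ))`. -/
def pd {n : Type*} [Fintype n] [DecidableEq n] (ρ σ : Matrix n n ℂ) : ℝ :=
  Real.sqrt (1 - fid ρ σ ^ 2)

/-- Choi matrix of a map on matrices. -/
def choi {m n : Type*} [Fintype m] [DecidableEq m]
    (N : Matrix m m ℂ → Matrix n n ℂ) : Matrix (m × n) (m × n) ℂ :=
  Matrix.of fun p q => N (Matrix.single p.1 q.1 1) p.2 q.2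

/-- A map is mixed-unitary if it is a convex combination of unitary conjugations. -/
def IsMixedUnitary {n : Type*} [Fintype n] [DecidableEq n]
    (N : Matrix n n ℂ → Matrix n n ℂ) : Prop :=
  ∃ (m : ℕ) (p : Fin m → ℝ) (U : Fin m → Matrix n n ℂ),
    (∀ i, 0 ≤ p i) ∧ (∑ i, p i = 1) ∧ (∀ i, U i ∈ Matrix.unitaryGroup n ℂ) ∧
    ∀ ρ, N ρ = ∑ i, (p i : ℂ) • (U i * ρ * (U i)ᴴ)

/-- `id_R ⊗ M` acting blockwise on a matrix on `R × S`. -/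
def idTensor {R S T : Type*} (M : Matrix S S ℂ →ₗ[ℂ] Matrix T T ℂ)
    (ρ : Matrix (R × S) (R × S) ℂ) : Matrix (R × T) (R × T) ℂ :=
  Matrix.of fun p q => M (Matrix.of fun s s' => ρ (p.1, s) (q.1, s')) p.2 q.2

end
section Aux

variable {n : Type*} [Fintype n] [DecidableEq n]

lemma maxEig_eq {A : Matrix n n ℂ} (hA : A.IsHermitian) :
    maxEig A = ⨆ i, hA.eigenvalues i := dif_pos hA

lemma eig_le_maxEig {A : Matrix n n ℂ} (hA : A.IsHermitian) (i : n) :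
    hA.eigenvalues i ≤ maxEig A := by
  rw [maxEig_eq hA]
  exact le_ciSup (Set.finite_range _).bddAbove i

lemma conj_mul_self (z : ℂ) : conj z * z = (Complex.normSq z : ℂ) := by
  rw [mul_comm, Complex.mul_conj]

lemma dot_self_eigenvectorBasis {A : Matrix n n ℂ} (hA : A.IsHermitian) (i : n) :
    star ⇑(hA.eigenvectorBasis i) ⬝ᵥ ⇑(hA.eigenvectorBasis i) = 1 := by
  have h1 : ‖hA.eigenvectorBasis i‖ = 1 := hA.eigenvectorBasis.orthonormal.1 i
  have h2 := EuclideanSpace.inner_eq_star_dotProduct (𝕜 := ℂ)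
    (hA.eigenvectorBasis i) (hA.eigenvectorBasis i)
  rw [inner_self_eq_norm_sq_to_K, h1] at h2
  rw [dotProduct_comm]
  simpa using h2.symm

lemma quadform_le_maxEig {A : Matrix n n ℂ} (hA : A.IsHermitian) (v : n → ℂ) :
    (star v ⬝ᵥ A *ᵥ v).re ≤ maxEig A * (star v ⬝ᵥ v).re := by
  obtain ⟨U, hUdef⟩ : ∃ U : Matrix n n ℂ, U = (hA.eigenvectorUnitary : Matrix n n ℂ) :=
    ⟨_, rfl⟩
  have hU1 : U * star U = 1 := by
    rw [hUdef]; exact Matrix.mem_unitaryGroup_iff.mp hA.eigenvectorUnitary.2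
  obtain ⟨u, hu⟩ : ∃ u : n → ℂ, u = star U *ᵥ v := ⟨_, rfl⟩
  have hrow : star v ᵥ* U = star u := by
    rw [hu, star_mulVec, star_eq_conjTranspose, conjTranspose_conjTranspose]
  have hQ : star v ⬝ᵥ A *ᵥ v = ∑ i, (hA.eigenvalues i : ℂ) * (conj (u i) * u i) := by
    conv_lhs => rw [hA.spectral_theorem, Unitary.conjStarAlgAut_apply]
    rw [← hUdef, ← mulVec_mulVec, ← mulVec_mulVec, dotProduct_mulVec, hrow]
    simp only [dotProduct, mulVec_diagonal, Function.comp_apply, Pi.star_apply,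
      Complex.star_def, ← hu]
    simp only [show ((RCLike.ofReal : ℝ → ℂ)) = Complex.ofReal from rfl]
    exact Finset.sum_congr rfl fun i _ => by ring
  have hQre : (star v ⬝ᵥ A *ᵥ v).re = ∑ i, hA.eigenvalues i * Complex.normSq (u i) := by
    rw [hQ, Complex.re_sum]
    refine Finset.sum_congr rfl fun i _ => ?_
    rw [conj_mul_self, ← Complex.ofReal_mul, Complex.ofReal_re]
  have hN : star u ⬝ᵥ u = star v ⬝ᵥ v := by
    rw [← hrow, ← dotProduct_mulVec, hu, mulVec_mulVec, hU1, one_mulVec]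
  have hNre : (star v ⬝ᵥ v).re = ∑ i, Complex.normSq (u i) := by
    rw [← hN]
    simp only [dotProduct, Pi.star_apply, Complex.star_def, Complex.re_sum]
    exact Finset.sum_congr rfl fun i _ => by
      rw [conj_mul_self, Complex.ofReal_re]
  rw [hQre, hNre, Finset.mul_sum]
  exact Finset.sum_le_sum fun i _ =>
    mul_le_mul_of_nonneg_right (eig_le_maxEig hA i) (Complex.normSq_nonneg _)

lemma trace_eq_sum_eig {A : Matrix n n ℂ} (hA : A.IsHermitian) :
    A.trace = ∑ i, (hA.eigenvalues i : ℂ) := by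
  conv_lhs => rw [hA.spectral_theorem, Unitary.conjStarAlgAut_apply]
  rw [trace_mul_cycle, Matrix.mem_unitaryGroup_iff'.mp hA.eigenvectorUnitary.2,
    one_mul, trace_diagonal]
  simp

end Aux


section Aux2

variable {n : Type*} [Fintype n] [DecidableEq n]

lemma dmv_quadform {I : Type*} [Fintype I] (v w : I → ℂ) :
    star w ⬝ᵥ (dmv v) *ᵥ w
      = conj (∑ j, conj (v j) * w j) * ∑ j, conj (v j) * w j := by
  have h1 : (dmv v) *ᵥ w = fun i => v i * ∑ j, conj (v j) * w j := by
    funext i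
    simp [dmv, mulVec, dotProduct, Finset.mul_sum, mul_assoc]
  rw [h1]
  have h2 : conj (∑ j, conj (v j) * w j) = ∑ i, conj (w i) * v i := by
    rw [map_sum]
    exact Finset.sum_congr rfl fun i _ => by simp [_root_.map_mul, mul_comm]
  rw [h2]
  simp only [dotProduct, Pi.star_apply, Complex.star_def, Finset.sum_mul]
  exact Finset.sum_congr rfl fun i _ => by ring

lemma dmv_isHermitian {I : Type*} (v : I → ℂ) : (dmv v).IsHermitian := by
  show _ᴴ = _
  ext i j
  simp [dmv, conjTranspose_apply, mul_comm]

lemma one_kron_isHermitian {R I : Type*} [Fintype R] [Fintype I] [DecidableEq R]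
    {A : Matrix I I ℂ} (hA : A.IsHermitian) :
    ((1 : Matrix R R ℂ) ⊗ₖ A).IsHermitian := by
  show _ᴴ = _
  ext ⟨r, i⟩ ⟨r', j⟩
  simp only [conjTranspose_apply, kroneckerMap_apply, Matrix.one_apply, Pi.star_apply]
  by_cases h : r = r'
  · subst h
    simpa using hA.apply i j
  · have h' : r' ≠ r := fun hh => h hh.symm
    simp [h, h']

lemma kron_quad {R I : Type*} [Fintype R] [DecidableEq R] [Fintype I]
    (A : Matrix I I ℂ) (w : R × I → ℂ) :
    star w ⬝ᵥ ((1 : Matrix R R ℂ) ⊗ₖ A) *ᵥ w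
      = ∑ r, star (fun j => w (r, j)) ⬝ᵥ A *ᵥ (fun j => w (r, j)) := by
  have key : ∀ p : R × I,
      (((1 : Matrix R R ℂ) ⊗ₖ A) *ᵥ w) p = ∑ j, A p.2 j * w (p.1, j) := by
    rintro ⟨r, i⟩
    show ∑ q : R × I, ((1 : Matrix R R ℂ) r q.1 * A i q.2) * w q = _
    rw [Fintype.sum_prod_type]
    have : ∀ r' : R, ∑ j, ((1 : Matrix R R ℂ) r r' * A i j) * w (r', j)
        = (1 : Matrix R R ℂ) r r' * ∑ j, A i j * w (r', j) := by
      intro r'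
      rw [Finset.mul_sum]
      exact Finset.sum_congr rfl fun j _ => by ring
    simp only [this, Matrix.one_apply, ite_mul, one_mul, zero_mul]
    simp
  simp only [dotProduct, key, Pi.star_apply]
  rw [Fintype.sum_prod_type]
  rfl

lemma dotProduct_matrix_sum {I R : Type*} [Fintype I] [Fintype R]
    (u : I → ℂ) (F : R → Matrix I I ℂ) :
    star u ⬝ᵥ (∑ r, F r) *ᵥ u = ∑ r, star u ⬝ᵥ (F r) *ᵥ u := by
  have h3 : ∀ g : I → I → R → ℂ,
      ∑ i, ∑ j, ∑ r, g i j r = ∑ r, ∑ i, ∑ j, g i j r := by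
    intro g
    calc ∑ i, ∑ j, ∑ r, g i j r
        = ∑ i, ∑ r, ∑ j, g i j r :=
          Finset.sum_congr rfl fun i _ => Finset.sum_comm
      _ = ∑ r, ∑ i, ∑ j, g i j r := Finset.sum_comm
  simp only [mulVec, dotProduct, Matrix.sum_apply, Finset.sum_mul, Finset.mul_sum,
    Pi.star_apply]
  exact h3 fun i j r => star (u i) * (F r i j * u j)

lemma maxEig_le_trace {A : Matrix n n ℂ} [Nonempty n] (hA : A.PosSemidef) :
    maxEig A ≤ A.trace.re := by
  rw [maxEig_eq hA.1]
  refine ciSup_le fun i => ?_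
  have ht : A.trace.re = ∑ j, hA.1.eigenvalues j := by
    rw [trace_eq_sum_eig hA.1, Complex.re_sum]
    simp
  rw [ht]
  exact Finset.single_le_sum (fun j _ => hA.eigenvalues_nonneg j) (Finset.mem_univ i)

lemma trace_le_card_maxEig {A : Matrix n n ℂ} (hA : A.IsHermitian) :
    A.trace.re ≤ (Fintype.card n : ℝ) * maxEig A := by
  have ht : A.trace.re = ∑ j, hA.eigenvalues j := by
    rw [trace_eq_sum_eig hA, Complex.re_sum]
    simp
  rw [ht]
  calc ∑ j, hA.eigenvalues j ≤ ∑ _j : n, maxEig A :=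
        Finset.sum_le_sum fun j _ => eig_le_maxEig hA j
    _ = (Fintype.card n : ℝ) * maxEig A := by
        rw [Finset.sum_const, Finset.card_univ, nsmul_eq_mul]

end Aux2

/-- the SDP characterization of the conditional max-entropy is bounded by
`log₂(λ₀^B · D)` for a tripartite pure state with maximally mixed marginal on `R`. -/
theorem stmt4 {Rt At Bt : Type*} [Fintype Rt] [Fintype At] [Fintype Bt]
    [DecidableEq Rt] [DecidableEq At] [DecidableEq Bt] [Nonempty Bt]
    (ψ : Rt × At × Bt → ℂ)
    (hunit : ∑ x, ‖ψ x‖ ^ 2 = 1)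
    (D : ℕ) (hD : D = Fintype.card Rt) (hDpos : 0 < D)
    (hmix : (Matrix.of fun r r' : Rt => ∑ a, ∑ b, ψ (r, a, b) * conj (ψ (r', a, b)))
      = (D : ℂ)⁻¹ • (1 : Matrix Rt Rt ℂ)) :
    Real.logb 2
        (sInf {x : ℝ | ∃ Z : Matrix (At × Bt) (At × Bt) ℂ, Z.PosSemidef ∧
          ((1 : Matrix Rt Rt ℂ) ⊗ₖ Z - dmv ψ).PosSemidef ∧
          x = maxEig (Matrix.of fun b b' : Bt => ∑ a, Z (a, b) (a, b'))}) ≤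
      Real.logb 2
        (maxEig (Matrix.of fun b b' : Bt => ∑ r, ∑ a, ψ (r, a, b) * conj (ψ (r, a, b'))) * D) := by
    classical
  -- nonemptiness
  have hne : Nonempty (Rt × At × Bt) := by
    by_contra h
    rw [not_nonempty_iff] at h
    simp at hunit
  haveI hAB : Nonempty (At × Bt) := ⟨(Classical.arbitrary (Rt × At × Bt)).2⟩
  -- the B-marginal matrix
  set N : Matrix Bt Bt ℂ :=
    Matrix.of (fun b b' : Bt => ∑ r, ∑ a, ψ (r, a, b) * conj (ψ (r, a, b'))) with hNdef
  -- the feasible point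
  set Z : Matrix (At × Bt) (At × Bt) ℂ :=
    Matrix.of (fun i j => (D : ℂ) * ∑ r, ψ (r, i) * conj (ψ (r, j))) with hZdef
  have hZsum : Z = ∑ r : Rt, (D : ℂ) • dmv (fun j => ψ (r, j)) := by
    rw [hZdef]
    ext i j
    simp [dmv, Matrix.sum_apply, Finset.mul_sum]
  have hZquadC : ∀ u : At × Bt → ℂ,
      star u ⬝ᵥ Z *ᵥ u
        = ∑ r, (D : ℂ) *
            (conj (∑ j, conj (ψ (r, j)) * u j) * ∑ j, conj (ψ (r, j)) * u j) := by
    intro u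
    rw [hZsum, dotProduct_matrix_sum]
    refine Finset.sum_congr rfl fun r _ => ?_
    rw [smul_mulVec, dotProduct_smul, smul_eq_mul, dmv_quadform]
  have hZquadR : ∀ u : At × Bt → ℂ,
      star u ⬝ᵥ Z *ᵥ u
        = (((D : ℝ) * ∑ r, Complex.normSq (∑ j, conj (ψ (r, j)) * u j) : ℝ) : ℂ) := by
    intro u
    rw [hZquadC u, Complex.ofReal_mul, Complex.ofReal_sum, Finset.mul_sum]
    refine Finset.sum_congr rfl fun r _ => ?_
    rw [conj_mul_self]
    norm_cast
  have hZherm : Z.IsHermitian := by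
    rw [hZdef]
    show _ᴴ = _
    ext i j
    simp only [conjTranspose_apply, Matrix.of_apply, Pi.star_apply, Complex.star_def,
      _root_.map_mul, map_sum, Complex.conj_conj, map_natCast]
    rw [Finset.mul_sum, Finset.mul_sum]
    exact Finset.sum_congr rfl fun r _ => by ring
  have hZpsd : Z.PosSemidef := by
    refine Matrix.PosSemidef.of_dotProduct_mulVec_nonneg hZherm fun u => ?_
    rw [hZquadR u, Complex.zero_le_real]
    exact mul_nonneg (Nat.cast_nonneg _)
      (Finset.sum_nonneg fun r _ => Complex.normSq_nonneg _)
  -- feasibility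
  have hfeas : ((1 : Matrix Rt Rt ℂ) ⊗ₖ Z - dmv ψ).PosSemidef := by
    refine Matrix.PosSemidef.of_dotProduct_mulVec_nonneg
      ((one_kron_isHermitian hZherm).sub (dmv_isHermitian ψ)) fun w => ?_
    rw [sub_mulVec, dotProduct_sub, kron_quad, dmv_quadform]
    have e1 : ∑ r, star (fun j => w (r, j)) ⬝ᵥ Z *ᵥ (fun j => w (r, j))
        = (((D : ℝ) * ∑ r, ∑ r',
            Complex.normSq (∑ j, conj (ψ (r', j)) * w (r, j)) : ℝ) : ℂ) := by
      have h := fun r : Rt => hZquadR (fun j => w (r, j))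
      simp only [h]
      rw [← Complex.ofReal_sum]
      exact congrArg _ (Finset.mul_sum _ _ _).symm
    have hT : Complex.normSq (∑ j, conj (ψ j) * w j)
        ≤ (D : ℝ) * ∑ r, ∑ r',
            Complex.normSq (∑ j, conj (ψ (r', j)) * w (r, j)) := by
      calc Complex.normSq (∑ j, conj (ψ j) * w j)
          = Complex.normSq (∑ r, ∑ j, conj (ψ (r, j)) * w (r, j)) := by
            rw [Fintype.sum_prod_type]
        _ = ‖∑ r, ∑ j, conj (ψ (r, j)) * w (r, j)‖ ^ 2 :=
            (Complex.sq_norm _).symm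
        _ ≤ (∑ r, ‖∑ j, conj (ψ (r, j)) * w (r, j)‖) ^ 2 := by
            apply pow_le_pow_left₀ (norm_nonneg _)
            exact norm_sum_le _ _
        _ ≤ (Fintype.card Rt : ℝ) *
              ∑ r, ‖∑ j, conj (ψ (r, j)) * w (r, j)‖ ^ 2 := by
            have := sq_sum_le_card_mul_sum_sq (s := (Finset.univ : Finset Rt))
              (f := fun r => ‖∑ j, conj (ψ (r, j)) * w (r, j)‖)
            simpa using this
        _ = (D : ℝ) * ∑ r, Complex.normSq (∑ j, conj (ψ (r, j)) * w (r, j)) := by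
            rw [hD]
            congr 1
            exact Finset.sum_congr rfl fun r _ => Complex.sq_norm _
        _ ≤ (D : ℝ) * ∑ r, ∑ r',
              Complex.normSq (∑ j, conj (ψ (r', j)) * w (r, j)) := by
            refine mul_le_mul_of_nonneg_left ?_ (Nat.cast_nonneg _)
            refine Finset.sum_le_sum fun r _ => ?_
            exact Finset.single_le_sum
              (f := fun r' => Complex.normSq (∑ j, conj (ψ (r', j)) * w (r, j)))
              (fun r' _ => Complex.normSq_nonneg _) (Finset.mem_univ r)
    rw [e1, conj_mul_self, ← Complex.ofReal_sub, Complex.zero_le_real]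
    exact sub_nonneg.mpr hT
  -- the B-marginal of Z
  have hZB : (Matrix.of fun b b' : Bt => ∑ a, Z (a, b) (a, b')) = (D : ℂ) • N := by
    ext b b'
    rw [hZdef, hNdef]
    simp only [Matrix.of_apply, Matrix.smul_apply, smul_eq_mul]
    rw [← Finset.mul_sum]
    congr 1
    exact Finset.sum_comm
  have hNherm : N.IsHermitian := by
    rw [hNdef]
    show _ᴴ = _
    ext b b'
    simp only [conjTranspose_apply, Matrix.of_apply, Pi.star_apply, Complex.star_def,
      _root_.map_mul, map_sum, Complex.conj_conj]
    refine Finset.sum_congr rfl fun r _ => Finset.sum_congr rfl fun a _ => by ring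
  have hDNherm : ((D : ℂ) • N).IsHermitian := by
    show _ᴴ = _
    rw [conjTranspose_smul, star_natCast, hNherm]
  have hre : ∀ z : ℂ, RCLike.re z = z.re := fun z => rfl
  have h2 : maxEig ((D : ℂ) • N) ≤ maxEig N * D := by
    rw [maxEig_eq hDNherm]
    refine ciSup_le fun i => ?_
    rw [hDNherm.eigenvalues_eq i, smul_mulVec, dotProduct_smul, smul_eq_mul, hre]
    simp only [Complex.mul_re, Complex.natCast_re, Complex.natCast_im, zero_mul, sub_zero]
    have hq := quadform_le_maxEig hNherm ⇑(hDNherm.eigenvectorBasis i)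
    rw [dot_self_eigenvectorBasis hDNherm i] at hq
    simp only [Complex.one_re, mul_one] at hq
    calc (D : ℝ) * (star ⇑(hDNherm.eigenvectorBasis i) ⬝ᵥ
            N *ᵥ ⇑(hDNherm.eigenvectorBasis i)).re
        ≤ (D : ℝ) * maxEig N := mul_le_mul_of_nonneg_left hq (Nat.cast_nonneg D)
      _ = maxEig N * D := mul_comm _ _
  -- quantities needed about arbitrary feasible points
  have hTψ : (∑ x : Rt × At × Bt, conj (ψ x) * ψ x) = 1 := by
    have hterm : ∀ x, conj (ψ x) * ψ x = ((‖ψ x‖ ^ 2 : ℝ) : ℂ) := by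
      intro x; rw [conj_mul_self, Complex.sq_norm]
    rw [Finset.sum_congr rfl fun x _ => hterm x, ← Complex.ofReal_sum, hunit,
      Complex.ofReal_one]
  have hlow : ∀ x ∈ {x : ℝ | ∃ Zm : Matrix (At × Bt) (At × Bt) ℂ, Zm.PosSemidef ∧
      ((1 : Matrix Rt Rt ℂ) ⊗ₖ Zm - dmv ψ).PosSemidef ∧
      x = maxEig (Matrix.of fun b b' : Bt => ∑ a, Zm (a, b) (a, b'))},
      ((Fintype.card Bt : ℝ))⁻¹ ≤ x := by
    rintro x ⟨Zm, hZm, hfm, rfl⟩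
    have hdmv1 : star ψ ⬝ᵥ dmv ψ *ᵥ ψ = 1 := by
      rw [dmv_quadform, hTψ]; simp
    have h0 := hfm.dotProduct_mulVec_nonneg ψ
    rw [sub_mulVec, dotProduct_sub, hdmv1] at h0
    have h0' : 1 ≤ (star ψ ⬝ᵥ ((1 : Matrix Rt Rt ℂ) ⊗ₖ Zm) *ᵥ ψ).re := by
      have h1 := (Complex.le_def.mp h0).1
      simp only [Complex.zero_re, Complex.sub_re, Complex.one_re] at h1
      linarith
    have hψnorm : ∑ r, (star (fun j => ψ (r, j)) ⬝ᵥ (fun j => ψ (r, j))).re = 1 := by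
      rw [← Complex.re_sum]
      have hs : ∑ r, (star (fun j => ψ (r, j)) ⬝ᵥ (fun j => ψ (r, j)))
          = ∑ x : Rt × At × Bt, conj (ψ x) * ψ x := by
        rw [Fintype.sum_prod_type]
        rfl
      rw [hs, hTψ, Complex.one_re]
    have hkb : (star ψ ⬝ᵥ ((1 : Matrix Rt Rt ℂ) ⊗ₖ Zm) *ᵥ ψ).re ≤ maxEig Zm := by
      rw [kron_quad, Complex.re_sum]
      calc ∑ r, (star (fun j => ψ (r, j)) ⬝ᵥ Zm *ᵥ (fun j => ψ (r, j))).re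
          ≤ ∑ r, maxEig Zm * (star (fun j => ψ (r, j)) ⬝ᵥ (fun j => ψ (r, j))).re :=
            Finset.sum_le_sum fun r _ => quadform_le_maxEig hZm.1 _
        _ = maxEig Zm * ∑ r, (star (fun j => ψ (r, j)) ⬝ᵥ (fun j => ψ (r, j))).re :=
            (Finset.mul_sum _ _ _).symm
        _ = maxEig Zm := by rw [hψnorm, mul_one]
    have h3 : maxEig Zm ≤ Zm.trace.re := maxEig_le_trace hZm
    have htr : Zm.trace = (Matrix.of fun b b' : Bt => ∑ a, Zm (a, b) (a, b')).trace := by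
      simp only [Matrix.trace, Matrix.diag, Matrix.of_apply]
      rw [Fintype.sum_prod_type]
      exact Finset.sum_comm
    have hZmBherm :
        (Matrix.of fun b b' : Bt => ∑ a, Zm (a, b) (a, b')).IsHermitian := by
      show _ᴴ = _
      ext b b'
      simp only [conjTranspose_apply, Matrix.of_apply, Complex.star_def, map_sum]
      exact Finset.sum_congr rfl fun a _ => hZm.1.apply (a, b) (a, b')
    have h4 := trace_le_card_maxEig hZmBherm
    have h3' : maxEig Zm ≤
        (Matrix.of fun b b' : Bt => ∑ a, Zm (a, b) (a, b')).trace.re := htr ▸ h3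
    have hc : (0 : ℝ) < (Fintype.card Bt : ℝ) := by
      exact_mod_cast Fintype.card_pos
    rw [inv_eq_one_div, div_le_iff₀ hc]
    nlinarith [h0', hkb, h3', h4]
  have hbdd : BddBelow {x : ℝ | ∃ Zm : Matrix (At × Bt) (At × Bt) ℂ, Zm.PosSemidef ∧
      ((1 : Matrix Rt Rt ℂ) ⊗ₖ Zm - dmv ψ).PosSemidef ∧
      x = maxEig (Matrix.of fun b b' : Bt => ∑ a, Zm (a, b) (a, b'))} :=
    ⟨_, fun x hx => hlow x hx⟩
  have hx0mem : maxEig (Matrix.of fun b b' : Bt => ∑ a, Z (a, b) (a, b'))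
      ∈ {x : ℝ | ∃ Zm : Matrix (At × Bt) (At × Bt) ℂ, Zm.PosSemidef ∧
        ((1 : Matrix Rt Rt ℂ) ⊗ₖ Zm - dmv ψ).PosSemidef ∧
        x = maxEig (Matrix.of fun b b' : Bt => ∑ a, Zm (a, b) (a, b'))} :=
    ⟨Z, hZpsd, hfeas, rfl⟩
  refine Real.logb_le_logb_of_le (by norm_num) ?_ ?_
  · refine lt_of_lt_of_le (inv_pos.mpr ?_) (le_csInf ⟨_, hx0mem⟩ hlow)
    exact_mod_cast Fintype.card_pos
  · refine le_trans (csInf_le hbdd hx0mem) ?_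
    rw [hZB]
    exact h2
end

section
/- The map N(ρ) = ½(Tr ρ)·𝟙 − ½ρᵀ on 3×3 complex matrices (the Werner–Holevo channel in dimension 3) is a unital, trace-preserving, completely positive map that is not a mixed-unitary channel. -/
open Matrix Kronecker Finset
open scoped ComplexConjugate Classical ComplexOrder

/-- the Werner–Holevo channel in dimension 3 is a unital trace-preserving
completely positive map which is not mixed unitary. -/
theorem stmt7 (N : Matrix (Fin 3) (Fin 3) ℂ → Matrix (Fin 3) (Fin 3) ℂ)
    (hN : ∀ ρ, N ρ = (2 : ℂ)⁻¹ • (ρ.trace • (1 : Matrix (Fin 3) (Fin 3) ℂ)) -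
      (2 : ℂ)⁻¹ • ρᵀ) :
    N 1 = 1 ∧ (∀ ρ, (N ρ).trace = ρ.trace) ∧ (choi N).PosSemidef ∧ ¬ IsMixedUnitary N := by
  have hM : ∀ p q : Fin 3 × Fin 3, choi N p q =
      2⁻¹ * ((if p.1 = q.1 then 1 else 0) * (if p.2 = q.2 then 1 else 0))
      - 2⁻¹ * (if p.1 = q.2 ∧ q.1 = p.2 then 1 else 0) := by
    intro p q
    have htr : (Matrix.single p.1 q.1 (1:ℂ)).trace = if p.1 = q.1 then 1 else 0 := by
      by_cases h : p.1 = q.1 <;>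
        simp [h, Matrix.trace_single_eq_same, Matrix.trace_single_eq_of_ne, Ne.symm]
    simp only [choi, Matrix.of_apply, hN, Matrix.sub_apply, Matrix.smul_apply, htr,
      Matrix.transpose_apply, Matrix.one_apply, smul_eq_mul]
    simp only [Matrix.single, Matrix.of_apply]
  refine ⟨?_, ?_, ⟨?_, ?_⟩, ?_⟩
  · rw [hN, Matrix.trace_one, Matrix.transpose_one, smul_smul, ← sub_smul]
    norm_num
  · intro ρ
    rw [hN]
    simp only [Matrix.trace_sub, Matrix.trace_smul, Matrix.trace_one, Matrix.trace_transpose,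
      smul_eq_mul]
    norm_num
    ring
  · -- Hermitian
    ext p q
    rw [Matrix.conjTranspose_apply, hM, hM]
    have e1 : (q.1 = p.1) ↔ (p.1 = q.1) := eq_comm
    have e2 : (q.2 = p.2) ↔ (p.2 = q.2) := eq_comm
    have e3 : (q.1 = p.2 ∧ p.1 = q.2) ↔ (p.1 = q.2 ∧ q.1 = p.2) := and_comm
    simp only [e1, e2, e3]
    split_ifs <;> simp
  · -- quadratic form nonneg
    intro x
    have hmv : ∀ p : Fin 3 × Fin 3, (choi N *ᵥ x) p = 2⁻¹ * x p - 2⁻¹ * x p.swap := by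
      intro p
      rw [Matrix.mulVec, dotProduct]
      simp only [hM, sub_mul, mul_assoc]
      rw [Finset.sum_sub_distrib]
      rcases p with ⟨a, b⟩
      congr 1
      · rw [← Finset.mul_sum, Fintype.sum_prod_type]
        congr 1
        simp [ite_and, Finset.sum_ite_eq, Finset.mul_sum]
      · rw [← Finset.mul_sum, Fintype.sum_prod_type]
        congr 1
        simp [ite_and, Finset.sum_ite_eq, Finset.sum_ite_eq', Prod.swap]
    have hd : dotProduct (star x) (choi N *ᵥ x)
        = 4⁻¹ * ∑ p : Fin 3 × Fin 3, star (x p - x p.swap) * (x p - x p.swap) := by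
      rw [dotProduct]
      simp only [hmv, Pi.star_apply]
      have h1 : ∑ p : Fin 3 × Fin 3, star (x p.swap) * x p.swap
          = ∑ p : Fin 3 × Fin 3, star (x p) * x p :=
        Fintype.sum_equiv (Equiv.prodComm (Fin 3) (Fin 3)) _ _ (fun p => rfl)
      have h2 : ∑ p : Fin 3 × Fin 3, star (x p.swap) * x p
          = ∑ p : Fin 3 × Fin 3, star (x p) * x p.swap :=
        Fintype.sum_equiv (Equiv.prodComm (Fin 3) (Fin 3)) _ _ (fun p => by simp)
      have expand : ∀ p : Fin 3 × Fin 3, star (x p - x p.swap) * (x p - x p.swap)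
          = star (x p) * x p + star (x p.swap) * x p.swap
            - star (x p) * x p.swap - star (x p.swap) * x p := by
        intro p; simp only [star_sub]; ring
      rw [Finset.sum_congr rfl fun p _ => expand p]
      have lhs : ∀ p : Fin 3 × Fin 3, star (x p) * (2⁻¹ * x p - 2⁻¹ * x p.swap)
          = 2⁻¹ * (star (x p) * x p) - 2⁻¹ * (star (x p) * x p.swap) := by
        intro p; ring
      rw [Finset.sum_congr rfl fun p _ => lhs p]
      simp only [Finset.sum_sub_distrib, Finset.sum_add_distrib, h1, h2, ← Finset.mul_sum]
      ring
    have hx : (x.sum fun i xi => x.sum fun j xj => star xi * choi N i j * xj)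
        = dotProduct (star ⇑x) (choi N *ᵥ ⇑x) := by
      simp [dotProduct, mulVec, Finsupp.sum_fintype, Finset.mul_sum, mul_assoc]
    rw [hx]
    rw [hd]
    refine mul_nonneg (by norm_num [Complex.le_def]) ?_
    exact Finset.sum_nonneg fun p _ => star_mul_self_nonneg _
  · -- not mixed unitary
    rintro ⟨m, p, U, hp, hsum, hU, hrep⟩
    obtain ⟨i₀, hi₀⟩ : ∃ i, p i ≠ 0 := by
      by_contra h
      push_neg at h
      simp [h] at hsum
    have entry : ∀ j k a b : Fin 3, ∑ i, (p i : ℂ) * (U i a j * star (U i b k))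
        = 2⁻¹ * ((if j = k then 1 else 0) * (if a = b then 1 else 0))
          - 2⁻¹ * (if j = b ∧ k = a then 1 else 0) := by
      intro j k a b
      have h := congrFun (congrFun (hrep (Matrix.single j k 1)) a) b
      have hs : ∀ V : Matrix (Fin 3) (Fin 3) ℂ,
          ((V * Matrix.single j k 1 * Vᴴ) : Matrix (Fin 3) (Fin 3) ℂ) a b
            = V a j * star (V b k) := by
        intro V
        simp [Matrix.mul_apply, Matrix.single, ite_and, Finset.sum_mul,
          Matrix.conjTranspose_apply]
      have htr : (Matrix.single j k (1:ℂ)).trace = if j = k then 1 else 0 := by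
        by_cases hjk : j = k <;>
          simp [hjk, Matrix.trace_single_eq_same, Matrix.trace_single_eq_of_ne, Ne.symm]
      rw [hN] at h
      simp only [Matrix.sub_apply, Matrix.smul_apply, Matrix.sum_apply, htr,
        Matrix.transpose_apply, Matrix.one_apply, smul_eq_mul, hs] at h
      rw [← h]
      simp only [Matrix.single, Matrix.of_apply]
    have key : ∀ j k : Fin 3,
        ∑ i, (p i : ℂ) * ((U i j k + U i k j) * star (U i j k + U i k j)) = 0 := by
      intro j k
      have expand : ∀ i : Fin m, (p i : ℂ) * ((U i j k + U i k j) * star (U i j k + U i k j))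
          = (p i : ℂ) * (U i j k * star (U i j k)) + (p i : ℂ) * (U i j k * star (U i k j))
            + (p i : ℂ) * (U i k j * star (U i j k)) + (p i : ℂ) * (U i k j * star (U i k j)) := by
        intro i; simp only [star_add]; ring
      rw [Finset.sum_congr rfl fun i _ => expand i]
      simp only [Finset.sum_add_distrib]
      rw [entry k k j j, entry k j j k, entry j k k j, entry j j k k]
      by_cases h : j = k <;> simp [h, Ne.symm]
    have hzero : ∀ j k : Fin 3, U i₀ j k + U i₀ k j = 0 := by
      intro j k
      have hnn : ∀ i ∈ (Finset.univ : Finset (Fin m)),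
          0 ≤ (p i : ℂ) * ((U i j k + U i k j) * star (U i j k + U i k j)) :=
        fun i _ => mul_nonneg (by exact_mod_cast hp i) (mul_star_self_nonneg _)
      have h0 := (Finset.sum_eq_zero_iff_of_nonneg hnn).1 (key j k) i₀ (Finset.mem_univ _)
      rcases mul_eq_zero.1 h0 with h | h
      · exact absurd (by exact_mod_cast h) hi₀
      · rcases mul_eq_zero.1 h with h' | h'
        · exact h'
        · exact star_eq_zero.mp h'
    have ht : (U i₀)ᵀ = - U i₀ := by
      ext a b
      have := hzero b a
      simp only [Matrix.transpose_apply, Matrix.neg_apply]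
      linear_combination this
    have hdet : (U i₀).det = 0 := by
      have h1 : (U i₀).det = - (U i₀).det := by
        conv_lhs => rw [← Matrix.det_transpose, ht]
        rw [Matrix.det_neg]
        norm_num [Fintype.card_fin]
      linear_combination (2⁻¹ : ℂ) * h1
    have hu := Matrix.det_of_mem_unitary (hU i₀)
    rw [hdet] at hu
    simpa [Unitary.mem_iff] using hu
end
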